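/- Let X be a finite type with at least two elements, W := X → Bool, and Y a subset of X with |Y| = 2. Let e := e^Σ_{Y,1≤} and, for each x ∈ X, let e_x be the equivalence relation on W relating w and u iff w x = u x. Then, in the complete lattice E(W) of equivalence relations on W: e_x ⊔ e = ⊤ for every x ∈ X, hence ⨅_{x∈X} (e_x ⊔ e) = ⊤, whereas (⨅_{x∈X} e_x) ⊔ e = e ≠ ⊤. In particular the distributive law ⨅_{x∈X}(e_x ⊔ e) = (⨅_{x∈X} e_x) ⊔ e fails, so the lattice of interrogative agendas generated by the relations e^Σ_{Y',k≤} is not distributive. -/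

import Mathlib

/-- The sum-score of a binary profile `w` on a finite set `Y` of parameters:
the number of `y ∈ Y` with `w y = true`. -/
def score {X : Type*} (Y : Finset X) (w : X → Bool) : ℕ :=
  (Y.filter fun y => w y = true).card

/-- The equivalence relation `e^Σ_{Y,k≤}` on binary profiles: `w ~ u` iff
`w_Y ≤ k ↔ u_Y ≤ k`, as an element of the complete lattice `E(W) = Setoid W`. -/
def eSigLe {X : Type*} (Y : Finset X) (k : ℕ) : Setoid (X → Bool) :=
  ⟨fun w u => (score Y w ≤ k ↔ score Y u ≤ k), ⟨fun _ => Iff.rfl, Iff.symm, Iff.trans⟩⟩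

/-- The equivalence relation `e_x` on binary profiles: `w ~ u` iff `w x = u x`,
as an element of the complete lattice `E(W) = Setoid W`. -/
def eCoord {X : Type*} (x : X) : Setoid (X → Bool) :=
  ⟨fun w u => w x = u x, ⟨fun _ => rfl, Eq.symm, Eq.trans⟩⟩

/-- For `X` finite with at least two elements and `Y ⊆ X` with `|Y| = 2`, letting
`e := e^Σ_{Y,1≤}`: `e_x ⊔ e = ⊤` for every `x`, hence `⨅_x (e_x ⊔ e) = ⊤`, while
`(⨅_x e_x) ⊔ e = e ≠ ⊤`; in particular the distributive law fails in the lattice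
of interrogative agendas. -/
theorem stmt15 {X : Type*} [Fintype X] [Nontrivial X] (Y : Finset X) (hY : Y.card = 2) :
    (∀ x : X, eCoord x ⊔ eSigLe Y 1 = ⊤) ∧
    (⨅ x : X, (eCoord x ⊔ eSigLe Y 1)) = ⊤ ∧
    (⨅ x : X, eCoord x) ⊔ eSigLe Y 1 = eSigLe Y 1 ∧
    eSigLe Y 1 ≠ ⊤ ∧
    (⨅ x : X, (eCoord x ⊔ eSigLe Y 1)) ≠ (⨅ x : X, eCoord x) ⊔ eSigLe Y 1 := by
  classical
  have hscore_aux : ∀ (x : X) (b : Bool), score Y (fun z => if z = x then b else false) ≤ 1 := by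
    intro x b
    have hsub : (Y.filter fun y => (if y = x then b else false) = true) ⊆ {x} := by
      intro y hy
      simp only [Finset.mem_filter] at hy
      simp only [Finset.mem_singleton]
      by_contra h
      simp [h] at hy
    calc score Y _ ≤ ({x} : Finset X).card := Finset.card_le_card hsub
      _ = 1 := Finset.card_singleton x
  have hsup : ∀ x : X, eCoord x ⊔ eSigLe Y 1 = ⊤ := by
    intro x
    apply le_antisymm le_top
    rw [Setoid.le_def]
    intro w u _
    have h1 : (eCoord x ⊔ eSigLe Y 1) w (fun z => if z = x then w x else false) :=
      Setoid.le_def.mp le_sup_left (by show w x = (if x = x then w x else false); simp [eCoord])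
    have h2 : (eCoord x ⊔ eSigLe Y 1) (fun z => if z = x then w x else false)
        (fun z => if z = x then u x else false) :=
      Setoid.le_def.mp le_sup_right (iff_of_true (hscore_aux x (w x)) (hscore_aux x (u x)))
    have h3 : (eCoord x ⊔ eSigLe Y 1) (fun z => if z = x then u x else false) u :=
      Setoid.le_def.mp le_sup_left (by show (if x = x then u x else false) = u x; simp [eCoord])
    exact (eCoord x ⊔ eSigLe Y 1).trans' ((eCoord x ⊔ eSigLe Y 1).trans' h1 h2) h3
  have hinf_top : (⨅ x : X, (eCoord x ⊔ eSigLe Y 1)) = ⊤ := by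
    simp [hsup]
  have hbot : (⨅ x : X, eCoord x) = ⊥ := by
    apply le_antisymm _ bot_le
    rw [Setoid.le_def]
    intro w u h
    have : w = u := funext fun x => Setoid.le_def.mp (iInf_le _ x) h
    exact this
  have hsup_e : (⨅ x : X, eCoord x) ⊔ eSigLe Y 1 = eSigLe Y 1 := by
    rw [hbot, bot_sup_eq]
  have hne : eSigLe Y 1 ≠ ⊤ := by
    intro h
    have hrel : (eSigLe Y 1) (fun _ => false) (fun _ => true) := by
      rw [h]; exact trivial
    have h0 : score Y (fun _ => false) = 0 := by simp [score]
    have h2 : score Y (fun _ => true) = 2 := by simpa [score] using hY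
    rw [show (eSigLe Y 1) (fun _ => false) (fun _ => true) =
      (score Y (fun _ => false) ≤ 1 ↔ score Y (fun _ => true) ≤ 1) from rfl, h0, h2] at hrel
    omega
  refine ⟨hsup, hinf_top, hsup_e, hne, ?_⟩
  rw [hinf_top, hsup_e]
  exact fun h => hne h.symm
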